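/- For every prime θ with θ ≡ 1 (mod 6) and θ > 13, there exist integers a, b with θ ∤ a, θ ∤ b, and b^3 ≡ a^3 + 1 (mod θ); that is, every prime of the form 6a + 1 larger than 13 has two nonzero consecutive cubic residues. (Germain's theorem in her letter to Legendre.) -/

import Mathlib

open Finset

lemma cube_roots' {F : Type*} [Field F] {ζ : F} (h3 : ζ ^ 3 = 1) (h1 : ζ ≠ 1)
    {y : F} (hy : y ^ 3 = 1) : y = 1 ∨ y = ζ ∨ y = ζ ^ 2 := by
  have hs : ζ ^ 2 + ζ + 1 = 0 := by
    have h : (ζ - 1) * (ζ ^ 2 + ζ + 1) = 0 := by linear_combination h3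
    rcases mul_eq_zero.mp h with h | h
    · exact absurd (sub_eq_zero.mp h) h1
    · exact h
  have key : (y - 1) * ((y - ζ) * (y - ζ ^ 2)) = 0 := by
    linear_combination hy + (y - 1) * h3 + (y - y^2) * hs
  rcases mul_eq_zero.mp key with h | h
  · exact Or.inl (sub_eq_zero.mp h)
  · rcases mul_eq_zero.mp h with h | h
    · exact Or.inr (Or.inl (sub_eq_zero.mp h))
    · exact Or.inr (Or.inr (sub_eq_zero.mp h))

lemma cube_of_pow_eq_one (p k : ℕ) [hp : Fact p.Prime] (hk : p = 6 * k + 1)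
    (x : ZMod p) (hx : x ≠ 0) (hxm : x ^ (2 * k) = 1) : ∃ y : ZMod p, y ^ 3 = x := by
  have hk0 : 0 < k := by
    rcases Nat.eq_zero_or_pos k with h | h
    · exfalso; have := hp.out.two_le; omega
    · exact h
  obtain ⟨g, hg⟩ := IsCyclic.exists_generator (α := (ZMod p)ˣ)
  have hord : orderOf g = 6 * k := by
    rw [orderOf_eq_card_of_forall_mem_zpowers hg, Nat.card_eq_fintype_card, ZMod.card_units]; omega
  set xu : (ZMod p)ˣ := Units.mk0 x hx with hxu
  obtain ⟨e, he'⟩ := mem_powers_iff_mem_zpowers.mpr (hg xu)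
  have he : g ^ e = xu := he'
  have hu1 : xu ^ (2 * k) = 1 := by
    apply Units.ext
    rw [Units.val_pow_eq_pow_val, Units.val_one, hxu, Units.val_mk0]
    exact hxm
  have hpow : g ^ (e * (2 * k)) = 1 := by rw [pow_mul, he, hu1]
  have hdvd : 6 * k ∣ e * (2 * k) := by
    rw [← hord]; exact orderOf_dvd_iff_pow_eq_one.mpr hpow
  obtain ⟨c, hc⟩ := hdvd
  have he3 : e = 3 * c := by
    have h1 : 2 * k * e = 2 * k * (3 * c) := by
      calc 2 * k * e = e * (2 * k) := by ring
        _ = 6 * k * c := hc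
        _ = 2 * k * (3 * c) := by ring
    exact Nat.eq_of_mul_eq_mul_left (by omega) h1
  refine ⟨((g ^ c : (ZMod p)ˣ) : ZMod p), ?_⟩
  rw [← Units.val_pow_eq_pow_val, ← pow_mul]
  have : c * 3 = e := by omega
  rw [this, he, hxu, Units.val_mk0]
lemma germain_main (p : ℕ) [hp : Fact p.Prime] (k : ℕ) (hk : p = 6 * k + 1) (hbig : 13 < p) :
    ∃ x : ZMod p, x ≠ 0 ∧ x + 1 ≠ 0 ∧ x ^ (2 * k) = 1 ∧ (x + 1) ^ (2 * k) = 1 := by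
  classical
  by_contra hcon
  push_neg at hcon
  set m := 2 * k with hm
  have hk3 : 2 ≤ k := by omega
  -- generator and cube root of unity
  obtain ⟨g, hg⟩ := IsCyclic.exists_generator (α := (ZMod p)ˣ)
  have hord : orderOf g = 6 * k := by
    rw [orderOf_eq_card_of_forall_mem_zpowers hg, Nat.card_eq_fintype_card, ZMod.card_units]; omega
  set ζ : ZMod p := ((g ^ m : (ZMod p)ˣ) : ZMod p) with hζdef
  have hgm : ((g : ZMod p)) ^ m = ζ := by rw [hζdef, Units.val_pow_eq_pow_val]
  have hζ3 : ζ ^ 3 = 1 := by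
    rw [hζdef, ← Units.val_pow_eq_pow_val, ← pow_mul]
    have h6 : m * 3 = 6 * k := by omega
    rw [h6, ← hord, pow_orderOf_eq_one, Units.val_one]
  have hζ1 : ζ ≠ 1 := by
    intro h
    have hu : (g ^ m : (ZMod p)ˣ) = 1 := Units.ext (by rw [← hζdef] at *; simpa using h)
    have h2 := orderOf_dvd_iff_pow_eq_one.mpr hu
    rw [hord] at h2
    have := Nat.le_of_dvd (by omega) h2
    omega
  have hζ0 : ζ ≠ 0 := by
    intro h; rw [h] at hζ3; simp at hζ3
  have hζ21 : ζ ^ 2 ≠ 1 := by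
    intro h
    apply hζ1
    have h4 : ζ ^ 3 = ζ ^ 2 * ζ := by ring
    rw [h, one_mul] at h4; rw [← h4, hζ3]
  have hζζ2 : ζ ≠ ζ ^ 2 := by
    intro h
    have h' : ζ * (ζ - 1) = 0 := by linear_combination -h
    rcases mul_eq_zero.mp h' with h' | h'
    · exact hζ0 h'
    · exact hζ1 (sub_eq_zero.mp h')
  have hζsq : ζ ^ 2 * ζ = 1 := by rw [← pow_succ]; exact hζ3
  have hζ2inv : (ζ ^ 2)⁻¹ = ζ := (eq_inv_of_mul_eq_one_left (by rw [mul_comm]; exact hζsq)).symm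
  have hζinv : ζ⁻¹ = ζ ^ 2 := (eq_inv_of_mul_eq_one_left hζsq).symm
  have hmev : Even m := ⟨k, by omega⟩
  -- nonzero small numerals
  have hne : ∀ n : ℕ, 0 < n → n ≤ 13 → ((n : ZMod p) ≠ 0) := by
    intro n h1 h2 h0
    rw [ZMod.natCast_eq_zero_iff] at h0
    have := Nat.le_of_dvd h1 h0; omega
  have h2ne : (2 : ZMod p) ≠ 0 := by have := hne 2 (by norm_num) (by norm_num); exact_mod_cast this
  have h3ne : (3 : ZMod p) ≠ 0 := by have := hne 3 (by norm_num) (by norm_num); exact_mod_cast this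
  have h4ne : (4 : ZMod p) ≠ 0 := by have := hne 4 (by norm_num) (by norm_num); exact_mod_cast this
  have h7ne : (7 : ZMod p) ≠ 0 := by have := hne 7 (by norm_num) (by norm_num); exact_mod_cast this
  have h8ne : (8 : ZMod p) ≠ 0 := by have := hne 8 (by norm_num) (by norm_num); exact_mod_cast this
  have h9ne : (9 : ZMod p) ≠ 0 := by have := hne 9 (by norm_num) (by norm_num); exact_mod_cast this
  have h13ne : (13 : ZMod p) ≠ 0 := by have := hne 13 (by norm_num) (by norm_num); exact_mod_cast this
  have hpm1 : m * 3 = p - 1 := by omega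
  have hclass : ∀ x : ZMod p, x ≠ 0 → x ^ m = 1 ∨ x ^ m = ζ ∨ x ^ m = ζ ^ 2 := by
    intro x hx
    apply cube_roots' hζ3 hζ1
    rw [← pow_mul, hpm1]
    exact ZMod.pow_card_sub_one_eq_one hx
  -- counting sets
  set T : ZMod p → ZMod p → Finset (ZMod p) := fun c d =>
    univ.filter (fun x : ZMod p => x ≠ 0 ∧ x + 1 ≠ 0 ∧ x ^ m = c ∧ (x + 1) ^ m = d) with hT
  have hmemT : ∀ c d x, x ∈ T c d ↔ (x ≠ 0 ∧ x + 1 ≠ 0 ∧ x ^ m = c ∧ (x + 1) ^ m = d) := by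
    intro c d x; rw [hT]; simp
  have hT11 : T 1 1 = ∅ := by
    rw [Finset.eq_empty_iff_forall_notMem]
    intro x hx
    rw [hmemT] at hx
    exact hcon x hx.1 hx.2.1 hx.2.2.1 hx.2.2.2
  -- tau bijection
  have hτ : ∀ c d, (T c d).card = (T d c).card := by
    intro c d
    apply Finset.card_nbij' (i := fun x => -1 - x) (j := fun x => -1 - x)
    · intro a ha
      rw [Finset.mem_coe, hmemT] at ha ⊢
      dsimp only
      obtain ⟨h1, h2, h3, h4⟩ := ha
      refine ⟨?_, ?_, ?_, ?_⟩
      · intro h; apply h2; linear_combination -h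
      · intro h; apply h1; linear_combination -h
      · rw [show (-1 - a : ZMod p) = -(a + 1) by ring, hmev.neg_pow]; exact h4
      · rw [show (-1 - a + 1 : ZMod p) = -a by ring, hmev.neg_pow]; exact h3
    · intro a ha
      rw [Finset.mem_coe, hmemT] at ha ⊢
      dsimp only
      obtain ⟨h1, h2, h3, h4⟩ := ha
      refine ⟨?_, ?_, ?_, ?_⟩
      · intro h; apply h2; linear_combination -h
      · intro h; apply h1; linear_combination -h
      · rw [show (-1 - a : ZMod p) = -(a + 1) by ring, hmev.neg_pow]; exact h4
      · rw [show (-1 - a + 1 : ZMod p) = -a by ring, hmev.neg_pow]; exact h3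
    · intro a _; ring
    · intro a _; ring
  -- sigma bijection : T ζ ζ ≃ T ζ² 1
  have hσ : (T ζ ζ).card = (T (ζ ^ 2) 1).card := by
    apply Finset.card_nbij' (i := fun x => x⁻¹) (j := fun x => x⁻¹)
    · intro a ha
      rw [Finset.mem_coe, hmemT] at ha ⊢
      obtain ⟨h1, h2, h3, h4⟩ := ha
      have hinv : a⁻¹ + 1 = a⁻¹ * (1 + a) := by field_simp
      refine ⟨inv_ne_zero h1, ?_, ?_, ?_⟩
      · rw [hinv]
        exact mul_ne_zero (inv_ne_zero h1) (by rwa [add_comm] at h2)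
      · rw [inv_pow, h3, hζinv]
      · rw [hinv, mul_pow, inv_pow, h3, show (1 + a : ZMod p) = a + 1 by ring, h4]
        exact inv_mul_cancel₀ hζ0
    · intro a ha
      rw [Finset.mem_coe, hmemT] at ha ⊢
      obtain ⟨h1, h2, h3, h4⟩ := ha
      have hinv : a⁻¹ + 1 = a⁻¹ * (1 + a) := by field_simp
      refine ⟨inv_ne_zero h1, ?_, ?_, ?_⟩
      · rw [hinv]
        exact mul_ne_zero (inv_ne_zero h1) (by rwa [add_comm] at h2)
      · rw [inv_pow, h3, hζ2inv]
      · rw [hinv, mul_pow, inv_pow, h3, show (1 + a : ZMod p) = a + 1 by ring, h4, hζ2inv, mul_one]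
    · intro a _; exact inv_inv a
    · intro a _; exact inv_inv a
  -- K sets
  set K : ZMod p → Finset (ZMod p) := fun c =>
    univ.filter (fun x : ZMod p => x ≠ 0 ∧ x ^ m = c) with hKdef
  have hmemK : ∀ c x, x ∈ K c ↔ (x ≠ 0 ∧ x ^ m = c) := by
    intro c x; rw [hKdef]; simp
  have hginvu : (g⁻¹ : (ZMod p)ˣ) ^ m * g ^ m = 1 := by group
  have hginv : ((g⁻¹ : (ZMod p)ˣ) : ZMod p) ^ m * ζ = 1 := by
    rw [hζdef, ← Units.val_pow_eq_pow_val, ← Units.val_mul, hginvu, Units.val_one]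
  have hKcard : (K 1).card = (K ζ).card := by
    apply Finset.card_nbij' (i := fun x => ((g : (ZMod p)ˣ) : ZMod p) * x)
      (j := fun y => ((g⁻¹ : (ZMod p)ˣ) : ZMod p) * y)
    · intro a ha
      rw [Finset.mem_coe, hmemK] at ha ⊢
      obtain ⟨h1, h2⟩ := ha
      exact ⟨mul_ne_zero (Units.ne_zero g) h1, by rw [mul_pow, hgm, h2, mul_one]⟩
    · intro a ha
      rw [Finset.mem_coe, hmemK] at ha ⊢
      obtain ⟨h1, h2⟩ := ha
      exact ⟨mul_ne_zero (Units.ne_zero g⁻¹) h1, by rw [mul_pow, h2, hginv]⟩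
    · intro a _
      dsimp only
      rw [← mul_assoc, ← Units.val_mul, inv_mul_cancel, Units.val_one, one_mul]
    · intro a _
      dsimp only
      rw [← mul_assoc, ← Units.val_mul, mul_inv_cancel, Units.val_one, one_mul]
  -- partition of rows
  have hsplit : ∀ c, (univ.filter (fun x : ZMod p => x ≠ 0 ∧ x + 1 ≠ 0 ∧ x ^ m = c)).card
      = (T c 1).card + (T c ζ).card + (T c (ζ ^ 2)).card := by
    intro c
    set R := univ.filter (fun x : ZMod p => x ≠ 0 ∧ x + 1 ≠ 0 ∧ x ^ m = c) with hR
    have hmemR : ∀ x, x ∈ R ↔ (x ≠ 0 ∧ x + 1 ≠ 0 ∧ x ^ m = c) := by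
      intro x; rw [hR]; simp
    have h1 := Finset.card_filter_add_card_filter_not
      (s := R) (p := fun x => (x + 1) ^ m = 1)
    have h2 := Finset.card_filter_add_card_filter_not
      (s := R.filter (fun x => ¬ (x + 1) ^ m = 1)) (p := fun x => (x + 1) ^ m = ζ)
    have e1 : R.filter (fun x => (x + 1) ^ m = 1) = T c 1 := by
      ext x
      rw [mem_filter, hmemR, hmemT]
      tauto
    have e2 : (R.filter (fun x => ¬ (x + 1) ^ m = 1)).filter (fun x => (x + 1) ^ m = ζ)
        = T c ζ := by
      ext x
      rw [mem_filter, mem_filter, hmemR, hmemT]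
      constructor
      · rintro ⟨⟨⟨hx0, hx1, hxc⟩, -⟩, hd⟩
        exact ⟨hx0, hx1, hxc, hd⟩
      · rintro ⟨hx0, hx1, hxc, hd⟩
        refine ⟨⟨⟨hx0, hx1, hxc⟩, ?_⟩, hd⟩
        rw [hd]; exact fun hh => hζ1 hh
    have e3 : (R.filter (fun x => ¬ (x + 1) ^ m = 1)).filter (fun x => ¬ (x + 1) ^ m = ζ)
        = T c (ζ ^ 2) := by
      ext x
      rw [mem_filter, mem_filter, hmemR, hmemT]
      constructor
      · rintro ⟨⟨⟨hx0, hx1, hxc⟩, hn1⟩, hn2⟩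
        rcases hclass (x + 1) hx1 with h | h | h
        · exact absurd h hn1
        · exact absurd h hn2
        · exact ⟨hx0, hx1, hxc, h⟩
      · rintro ⟨hx0, hx1, hxc, hd⟩
        refine ⟨⟨⟨hx0, hx1, hxc⟩, ?_⟩, ?_⟩
        · rw [hd]; exact fun hh => hζ21 hh
        · rw [hd]; exact fun hh => hζζ2 hh.symm
      -- note: filter of filter
    rw [e1] at h1
    rw [e2, e3] at h2
    omega
  -- row for c = 1
  have hmemneg1 : (-1 : ZMod p) ∈ K 1 := by
    rw [hmemK]
    exact ⟨neg_ne_zero.mpr one_ne_zero, by rw [hmev.neg_pow, one_pow]⟩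
  have hrow1 : (T 1 1).card + (T 1 ζ).card + (T 1 (ζ ^ 2)).card + 1 = (K 1).card := by
    have h := hsplit 1
    have herase : univ.filter (fun x : ZMod p => x ≠ 0 ∧ x + 1 ≠ 0 ∧ x ^ m = 1)
        = (K 1).erase (-1) := by
      ext x
      rw [mem_filter, mem_erase, hmemK]
      simp only [mem_univ, true_and]
      constructor
      · rintro ⟨h0, h1, hm'⟩
        exact ⟨fun hh => h1 (by rw [hh]; ring), h0, hm'⟩
      · rintro ⟨hne1, h0, hm'⟩
        exact ⟨h0, fun hh => hne1 (by linear_combination hh), hm'⟩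
    rw [herase, card_erase_of_mem hmemneg1] at h
    have hpos : 1 ≤ (K 1).card := card_pos.mpr ⟨-1, hmemneg1⟩
    omega
  -- row for c = ζ
  have hrowζ : (T ζ 1).card + (T ζ ζ).card + (T ζ (ζ ^ 2)).card = (K 1).card := by
    have h := hsplit ζ
    have heq : univ.filter (fun x : ZMod p => x ≠ 0 ∧ x + 1 ≠ 0 ∧ x ^ m = ζ) = K ζ := by
      ext x
      rw [mem_filter, hmemK]
      simp only [mem_univ, true_and]
      constructor
      · rintro ⟨h0, h1, hm'⟩; exact ⟨h0, hm'⟩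
      · rintro ⟨h0, hm'⟩
        refine ⟨h0, fun hh => ?_, hm'⟩
        have hx : x = -1 := by linear_combination hh
        rw [hx, hmev.neg_pow, one_pow] at hm'
        exact hζ1 hm'.symm
    rw [heq, ← hKcard] at h
    omega
  have hD : (T ζ (ζ ^ 2)).card = 1 := by
    have e0 : (T 1 1).card = 0 := by rw [hT11, card_empty]
    have eA : (T ζ 1).card = (T 1 ζ).card := hτ ζ 1
    have eB : (T ζ ζ).card = (T 1 (ζ ^ 2)).card := by rw [hσ]; exact hτ (ζ ^ 2) 1
    omega
  -- fixed point of x ↦ -(x+1)⁻¹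
  obtain ⟨x₀, hx₀⟩ := Finset.card_eq_one.mp hD
  have hx₀mem : x₀ ∈ T ζ (ζ ^ 2) := by rw [hx₀]; exact mem_singleton_self x₀
  obtain ⟨hx₀0, hx₀1, hx₀c, hx₀d⟩ := (hmemT _ _ _).mp hx₀mem
  have hhmem : -(x₀ + 1)⁻¹ ∈ T ζ (ζ ^ 2) := by
    rw [hmemT]
    refine ⟨neg_ne_zero.mpr (inv_ne_zero hx₀1), ?_, ?_, ?_⟩
    · intro h
      have h5 : (x₀ + 1)⁻¹ = 1 := by linear_combination -h
      have h6 : x₀ + 1 = 1 := by rw [← inv_inv (x₀ + 1), h5, inv_one]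
      exact hx₀0 (by linear_combination h6)
    · rw [hmev.neg_pow, inv_pow, hx₀d, hζ2inv]
    · have heq : -(x₀ + 1)⁻¹ + 1 = x₀ * (x₀ + 1)⁻¹ := by field_simp; ring
      rw [heq, mul_pow, inv_pow, hx₀c, hx₀d, hζ2inv, sq]
  have hfix : -(x₀ + 1)⁻¹ = x₀ := by
    rw [hx₀] at hhmem; exact mem_singleton.mp hhmem
  have hx₀eq : x₀ ^ 2 + x₀ + 1 = 0 := by
    have h9 : x₀ * (x₀ + 1) = -1 := by
      nth_rewrite 1 [← hfix]
      rw [neg_mul, inv_mul_cancel₀ hx₀1]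
    linear_combination h9
  -- singleton facts
  have singleton1 : ∀ x, x ∈ T ζ (ζ ^ 2) → x = x₀ := by
    intro x hx; rw [hx₀] at hx; exact mem_singleton.mp hx
  have singleton2 : ∀ x, x ∈ T (ζ ^ 2) ζ → x = -1 - x₀ := by
    have hcard2 : (T (ζ ^ 2) ζ).card = 1 := by rw [← hτ ζ (ζ ^ 2)]; exact hD
    have hmem2 : (-1 - x₀ : ZMod p) ∈ T (ζ ^ 2) ζ := by
      rw [hmemT]
      refine ⟨?_, ?_, ?_, ?_⟩
      · intro h; apply hx₀1; linear_combination -h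
      · intro h; apply hx₀0; linear_combination -h
      · rw [show (-1 - x₀ : ZMod p) = -(x₀ + 1) by ring, hmev.neg_pow]; exact hx₀d
      · rw [show (-1 - x₀ + 1 : ZMod p) = -x₀ by ring, hmev.neg_pow]; exact hx₀c
    obtain ⟨x₁, hx₁⟩ := Finset.card_eq_one.mp hcard2
    intro x hx
    rw [hx₁] at hx hmem2
    rw [mem_singleton.mp hx, ← mem_singleton.mp hmem2]
  -- powers of small numbers
  have h21eq : (2 : ZMod p) + 1 = 3 := by norm_num
  have h31eq : (3 : ZMod p) + 1 = 4 := by norm_num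
  have h81eq : (8 : ZMod p) + 1 = 9 := by norm_num
  have hs3 : ((2 : ZMod p) ^ m) ^ 3 = 1 := by
    rw [← pow_mul, hpm1]
    exact ZMod.pow_card_sub_one_eq_one h2ne
  have h8m : (8 : ZMod p) ^ m = 1 := by
    rw [show (8 : ZMod p) = 2 ^ 3 by norm_num, ← pow_mul, mul_comm, pow_mul]
    exact hs3
  have h9m1 : (9 : ZMod p) ^ m ≠ 1 := by
    intro h
    exact hcon 8 h8ne (by rw [h81eq]; exact h9ne) h8m (by rw [h81eq]; exact h)
  have h3m1 : (3 : ZMod p) ^ m ≠ 1 := by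
    intro h
    apply h9m1
    rw [show (9 : ZMod p) = 3 ^ 2 by norm_num, ← pow_mul, mul_comm, pow_mul, h, one_pow]
  have h2m1 : (2 : ZMod p) ^ m ≠ 1 := by
    intro h
    exact hcon 1 one_ne_zero (by rw [show (1 : ZMod p) + 1 = 2 by norm_num]; exact h2ne)
      (one_pow m) (by rw [show (1 : ZMod p) + 1 = 2 by norm_num]; exact h)
  have h4m : (4 : ZMod p) ^ m = ((2 : ZMod p) ^ m) ^ 2 := by
    rw [show (4 : ZMod p) = 2 ^ 2 by norm_num, ← pow_mul, mul_comm, pow_mul]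
  have hζ4 : (ζ ^ 2) ^ 2 = ζ := by
    have h : (ζ ^ 2) ^ 2 = ζ ^ 3 * ζ := by ring
    rw [h, hζ3, one_mul]
  -- final case analysis
  rcases hclass 2 h2ne with h | hs | hs
  · exact h2m1 h
  · rcases hclass 3 h3ne with h | ht | ht
    · exact h3m1 h
    · -- 2^m = ζ, 3^m = ζ : consider x = 3, (3+1)^m = 4^m = ζ^2
      have h3mem : (3 : ZMod p) ∈ T ζ (ζ ^ 2) := (hmemT _ _ _).mpr
        ⟨h3ne, by rw [h31eq]; exact h4ne, ht, by rw [h31eq, h4m, hs]⟩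
      have h3x := singleton1 3 h3mem
      apply h13ne
      rw [← h3x] at hx₀eq
      linear_combination hx₀eq
    · -- 2^m = ζ, 3^m = ζ^2 : x = 2
      have h2mem : (2 : ZMod p) ∈ T ζ (ζ ^ 2) := (hmemT _ _ _).mpr
        ⟨h2ne, by rw [h21eq]; exact h3ne, hs, by rw [h21eq]; exact ht⟩
      have h2x := singleton1 2 h2mem
      apply h7ne
      rw [← h2x] at hx₀eq
      linear_combination hx₀eq
  · rcases hclass 3 h3ne with h | ht | ht
    · exact h3m1 h
    · -- 2^m = ζ^2, 3^m = ζ : x = 2 in T ζ² ζ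
      have h2mem : (2 : ZMod p) ∈ T (ζ ^ 2) ζ := (hmemT _ _ _).mpr
        ⟨h2ne, by rw [h21eq]; exact h3ne, hs, by rw [h21eq]; exact ht⟩
      have h2x := singleton2 2 h2mem
      have hx₀3 : x₀ = -3 := by linear_combination h2x
      apply h7ne
      rw [hx₀3] at hx₀eq
      linear_combination hx₀eq
    · -- 2^m = ζ^2, 3^m = ζ^2 : x = 3 in T ζ² ζ since 4^m = (ζ²)² = ζ
      have h3mem : (3 : ZMod p) ∈ T (ζ ^ 2) ζ := (hmemT _ _ _).mpr
        ⟨h3ne, by rw [h31eq]; exact h4ne, ht, by rw [h31eq, h4m, hs]; exact hζ4⟩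
      have h3x := singleton2 3 h3mem
      have hx₀4 : x₀ = -4 := by linear_combination h3x
      apply h13ne
      rw [hx₀4] at hx₀eq
      linear_combination hx₀eq
/-- Germain's theorem from her letter to Legendre: every prime θ ≡ 1 (mod 6)
with θ > 13 has two nonzero consecutive cubic residues. -/
theorem consecutive_cubic_residues
    (θ : ℕ) (hθ : θ.Prime) (hmod : θ ≡ 1 [MOD 6]) (hbig : 13 < θ) :
    ∃ a b : ℤ, ¬ (θ : ℤ) ∣ a ∧ ¬ (θ : ℤ) ∣ b ∧ b ^ 3 ≡ a ^ 3 + 1 [ZMOD (θ : ℤ)] := by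
  haveI : Fact θ.Prime := ⟨hθ⟩
  have hmod' : θ % 6 = 1 := by
    have := hmod
    unfold Nat.ModEq at this
    omega
  set k := θ / 6 with hkdef
  have hk : θ = 6 * k + 1 := by omega
  obtain ⟨x, hx0, hx1, hxm, hxm1⟩ := germain_main θ k hk hbig
  obtain ⟨y, hy⟩ := cube_of_pow_eq_one θ k hk x hx0 hxm
  obtain ⟨z, hz⟩ := cube_of_pow_eq_one θ k hk (x + 1) hx1 hxm1
  obtain ⟨a, ha⟩ := ZMod.intCast_surjective (n := θ) y
  obtain ⟨b, hb⟩ := ZMod.intCast_surjective (n := θ) z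
  refine ⟨a, b, ?_, ?_, ?_⟩
  · intro hd
    rw [← ZMod.intCast_zmod_eq_zero_iff_dvd, ha] at hd
    apply hx0
    rw [← hy, hd, zero_pow three_ne_zero]
  · intro hd
    rw [← ZMod.intCast_zmod_eq_zero_iff_dvd, hb] at hd
    apply hx1
    rw [← hz, hd, zero_pow three_ne_zero]
  · rw [Int.ModEq]
    have : ((b ^ 3 : ℤ) : ZMod θ) = ((a ^ 3 + 1 : ℤ) : ZMod θ) := by
      push_cast
      rw [ha, hb, hy, hz]
    rwa [ZMod.intCast_eq_intCast_iff] at this
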